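/- Let H = (V, E) be a hypergraph with no empty hyperedge, and let G be its split-incidence graph: V(G) = V ∪ E, with V a clique, E an independent set, and v ∈ V adjacent to e ∈ E iff v ∈ e. Then H is threshold if and only if G is connected-domishold. -/

import Mathlib

open SimpleGraph Finset BigOperators

variable {V : Type*} [Fintype V] [DecidableEq V]

/-- `S` is a connected dominating set of `G`: every vertex is in `S` or has a neighbor in `S`,
and any two vertices of `S` are joined by a walk staying inside `S`
(i.e. `S` induces a connected subgraph). -/
def SimpleGraph.IsCDSet (G : SimpleGraph V) (S : Finset V) : Prop :=
  (∀ v : V, v ∈ S ∨ ∃ u ∈ S, G.Adj u v) ∧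
  ∀ u ∈ S, ∀ v ∈ S, ∃ p : G.Walk u v, ∀ x ∈ p.support, x ∈ S

/-- `(w, t)` is a connected-domishold structure of `G`. -/
def SimpleGraph.IsCDStructure (G : SimpleGraph V) (w : V → ℝ) (t : ℝ) : Prop :=
  (∀ v, 0 ≤ w v) ∧ 0 ≤ t ∧ ∀ S : Finset V, (t ≤ ∑ x ∈ S, w x) ↔ G.IsCDSet S

/-- `G` is connected-domishold. -/
def SimpleGraph.ConnectedDomishold (G : SimpleGraph V) : Prop :=
  ∃ (w : V → ℝ) (t : ℝ), G.IsCDStructure w t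

/-- `S` is a cutset of `G`: `G - S` is disconnected, i.e. there exist two vertices outside `S`
such that every walk between them meets `S`. -/
def SimpleGraph.IsCutset (G : SimpleGraph V) (S : Finset V) : Prop :=
  ∃ u v : V, u ∉ S ∧ v ∉ S ∧ u ≠ v ∧ ∀ p : G.Walk u v, ∃ x ∈ p.support, x ∈ S

/-- `S` is a minimal cutset of `G`. -/
def SimpleGraph.IsMinCutset (G : SimpleGraph V) (S : Finset V) : Prop :=
  G.IsCutset S ∧ ∀ S' ⊆ S, G.IsCutset S' → S' = S

/-- A hypergraph on vertex set `V`, given by its hyperedge predicate `Eh`, is threshold. -/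
def HypThreshold (Eh : Finset V → Prop) : Prop :=
  ∃ (w : V → ℝ) (t : ℝ), (∀ v, 0 ≤ w v) ∧ 0 ≤ t ∧
    ∀ X : Finset V, (∑ v ∈ X, w v ≤ t) ↔ ∀ e, Eh e → ¬ e ⊆ X

def HypOneSperner (Eh : Finset V → Prop) : Prop :=
  ∀ e f, Eh e → Eh f → e ≠ f → min (e \ f).card (f \ e).card = 1

def HypTwoSummable (Eh : Finset V → Prop) : Prop :=
  ∃ A₁ A₂ B₁ B₂ : Finset V,
    (∃ e, Eh e ∧ e ⊆ A₁) ∧ (∃ e, Eh e ∧ e ⊆ A₂) ∧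
    (∀ e, Eh e → ¬ e ⊆ B₁) ∧ (∀ e, Eh e → ¬ e ⊆ B₂) ∧
    ∀ v : V, ((if v ∈ A₁ then 1 else 0) + (if v ∈ A₂ then 1 else 0) : ℕ)
           = (if v ∈ B₁ then 1 else 0) + (if v ∈ B₂ then 1 else 0)

/-- The split-incidence graph of a hypergraph with hyperedge set `E`: vertices are
`V ⊕ {e // e ∈ E}`, the copy of `V` is a clique, the hyperedges form an independent set, and
`v` is adjacent to `e` iff `v ∈ e`. -/
def splitIncidence (E : Finset (Finset V)) : SimpleGraph (V ⊕ {e // e ∈ E}) :=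
  SimpleGraph.fromRel (fun p q =>
    (∃ u v : V, p = Sum.inl u ∧ q = Sum.inl v) ∨
    (∃ (v : V) (e : {e // e ∈ E}), p = Sum.inl v ∧ q = Sum.inr e ∧ v ∈ e.val))

section SplitAux

variable (E : Finset (Finset V))

lemma si_adj_inl_inl {u v : V} :
    (splitIncidence E).Adj (Sum.inl u) (Sum.inl v) ↔ u ≠ v := by
  simp [splitIncidence, SimpleGraph.fromRel_adj]

lemma si_adj_inl_inr {v : V} {e : {e // e ∈ E}} :
    (splitIncidence E).Adj (Sum.inl v) (Sum.inr e) ↔ v ∈ e.val := by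
  simp [splitIncidence, SimpleGraph.fromRel_adj]

lemma si_adj_inr {e : {e // e ∈ E}} {x : V ⊕ {e // e ∈ E}}
    (h : (splitIncidence E).Adj (Sum.inr e) x) : ∃ u, x = Sum.inl u ∧ u ∈ e.val := by
  cases x with
  | inl u =>
    exact ⟨u, rfl, ((si_adj_inl_inr E).mp h.symm)⟩
  | inr f =>
    exfalso
    have := h.ne
    simp only [splitIncidence, SimpleGraph.fromRel_adj] at h
    rcases h with ⟨-, h | h⟩ <;> rcases h with ⟨a, b, hab, -⟩ | ⟨a, b, hab, -⟩ <;>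
      exact (by simp at hab)

/-- the "degenerate" connected dominating sets. -/
def SIDeg (S : Finset (V ⊕ {e // e ∈ E})) : Prop :=
  ∃ e : {e // e ∈ E}, S = {Sum.inr e} ∧ (∀ v : V, v ∈ e.val) ∧
    ∀ f : {e // e ∈ E}, f = e

/-- A walk that starts at an `inr` vertex and ends elsewhere passes through an `inl`
vertex of the hyperedge. -/
lemma si_walk_from_inr {e : {e // e ∈ E}} {y : V ⊕ {e // e ∈ E}}
    (p : (splitIncidence E).Walk (Sum.inr e) y) (hy : y ≠ Sum.inr e) :
    ∃ u ∈ e.val, Sum.inl u ∈ p.support := by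
  cases p with
  | nil => exact absurd rfl hy
  | @cons _ x _ h q =>
    obtain ⟨u, rfl, hu⟩ := si_adj_inr E h
    exact ⟨u, hu, by simp [SimpleGraph.Walk.support_cons,
      SimpleGraph.Walk.start_mem_support]⟩

/-- Characterization of connected dominating sets of the split-incidence graph, when
`E` is nonempty and has no empty edge. -/
lemma si_cds_iff (hE : ∅ ∉ E) (hne : E.Nonempty) (S : Finset (V ⊕ {e // e ∈ E})) :
    (splitIncidence E).IsCDSet S ↔
      (∀ e : {e // e ∈ E}, ∃ v ∈ e.val, Sum.inl v ∈ S) ∨ SIDeg E S := by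
  constructor
  · rintro ⟨hdom, hconn⟩
    by_cases hA : ∃ v : V, Sum.inl v ∈ S
    · left
      intro e
      by_cases he : Sum.inr e ∈ S
      · obtain ⟨v, hv⟩ := hA
        obtain ⟨p, hp⟩ := hconn _ he _ hv
        obtain ⟨u, hu, hus⟩ := si_walk_from_inr E p (by simp)
        exact ⟨u, hu, hp _ hus⟩
      · rcases hdom (Sum.inr e) with h | ⟨x, hxS, hx⟩
        · exact absurd h he
        · obtain ⟨u, rfl, hu⟩ := si_adj_inr E hx.symm
          exact ⟨u, hu, hxS⟩
    · right
      push_neg at hA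
      have hAll : ∀ f : {e // e ∈ E}, Sum.inr f ∈ S := by
        intro f
        rcases hdom (Sum.inr f) with h | ⟨x, hxS, hx⟩
        · exact h
        · obtain ⟨u, rfl, -⟩ := si_adj_inr E hx.symm
          exact absurd hxS (hA u)
      have huniq : ∀ f g : {e // e ∈ E}, f = g := by
        intro f g
        by_contra hfg
        obtain ⟨p, hp⟩ := hconn _ (hAll f) _ (hAll g)
        obtain ⟨u, -, hus⟩ := si_walk_from_inr E p (by simp [Ne.symm hfg])
        exact absurd (hp _ hus) (hA u)
      obtain ⟨e₀, he₀⟩ := hne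
      refine ⟨⟨e₀, he₀⟩, ?_, ?_, fun f => huniq f _⟩
      · ext x
        simp only [Finset.mem_singleton]
        constructor
        · intro hx
          cases x with
          | inl u => exact absurd hx (hA u)
          | inr f => rw [huniq f ⟨e₀, he₀⟩]
        · rintro rfl; exact hAll _
      · intro v
        rcases hdom (Sum.inl v) with h | ⟨x, hxS, hx⟩
        · exact absurd h (hA v)
        · cases x with
          | inl u => exact absurd hxS (hA u)
          | inr f =>
            obtain ⟨u, hu, hue⟩ := si_adj_inr E hx
            obtain rfl : v = u := by simpa using hu
            rw [huniq ⟨e₀, he₀⟩ f]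
            exact hue
  · intro h
    rcases h with hchar | ⟨e, rfl, hcov, huniq⟩
    · -- every hyperedge meets the `inl` part of `S`
      have hwalk : ∀ y ∈ S, ∀ v : V, Sum.inl v ∈ S →
          ∃ p : (splitIncidence E).Walk (Sum.inl v) y, ∀ x ∈ p.support, x ∈ S := by
        intro y hy v hv
        cases y with
        | inl b =>
          by_cases hvb : v = b
          · subst hvb
            exact ⟨SimpleGraph.Walk.nil, by simpa using hv⟩
          · refine ⟨((si_adj_inl_inl E).mpr hvb).toWalk, ?_⟩
            intro x hx
            simp only [SimpleGraph.Adj.toWalk, SimpleGraph.Walk.support_cons,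
              SimpleGraph.Walk.support_nil, List.mem_cons, List.mem_singleton] at hx
            rcases hx with rfl | rfl | h
            · exact hv
            · exact hy
            · exact absurd h List.not_mem_nil
        | inr e =>
          obtain ⟨u, hu, huS⟩ := hchar e
          by_cases hvu : v = u
          · subst hvu
            refine ⟨((si_adj_inl_inr E).mpr hu).toWalk, ?_⟩
            intro x hx
            simp only [SimpleGraph.Adj.toWalk, SimpleGraph.Walk.support_cons,
              SimpleGraph.Walk.support_nil, List.mem_cons, List.mem_singleton] at hx
            rcases hx with rfl | rfl | h
            · exact hv
            · exact hy
            · exact absurd h List.not_mem_nil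
          · refine ⟨SimpleGraph.Walk.cons ((si_adj_inl_inl E).mpr hvu)
              ((si_adj_inl_inr E).mpr hu).toWalk, ?_⟩
            intro x hx
            simp only [SimpleGraph.Adj.toWalk, SimpleGraph.Walk.support_cons,
              SimpleGraph.Walk.support_nil, List.mem_cons, List.mem_singleton] at hx
            rcases hx with rfl | rfl | rfl | h
            · exact hv
            · exact huS
            · exact hy
            · exact absurd h List.not_mem_nil
      constructor
      · intro x
        obtain ⟨e₀, he₀⟩ := hne
        obtain ⟨v, hv, hvS⟩ := hchar ⟨e₀, he₀⟩
        cases x with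
        | inl u =>
          by_cases huv : u = v
          · subst huv; exact Or.inl hvS
          · exact Or.inr ⟨Sum.inl v, hvS, (si_adj_inl_inl E).mpr (Ne.symm huv)⟩
        | inr f =>
          obtain ⟨u, hu, huS⟩ := hchar f
          exact Or.inr ⟨Sum.inl u, huS, (si_adj_inl_inr E).mpr hu⟩
      · intro x hx y hy
        cases x with
        | inl a => exact hwalk y hy a hx
        | inr f =>
          obtain ⟨u, hu, huS⟩ := hchar f
          obtain ⟨p, hp⟩ := hwalk y hy u huS
          refine ⟨SimpleGraph.Walk.cons ((si_adj_inl_inr E).mpr hu).symm p, ?_⟩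
          intro z hz
          simp only [SimpleGraph.Walk.support_cons, List.mem_cons] at hz
          rcases hz with rfl | hz
          · exact hx
          · exact hp _ hz
    · constructor
      · intro x
        cases x with
        | inl u =>
          exact Or.inr ⟨Sum.inr e, Finset.mem_singleton_self _,
            ((si_adj_inl_inr E).mpr (hcov u)).symm⟩
        | inr f =>
          left; simp [huniq f]
      · intro x hx y hy
        simp only [Finset.mem_singleton] at hx hy
        subst hx; subst hy
        exact ⟨SimpleGraph.Walk.nil, by simp⟩

end SplitAux

/-- A hypergraph with no empty hyperedge is threshold iff its split-incidence graph is
connected-domishold. -/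
theorem hypThreshold_iff_splitIncidence_connectedDomishold (E : Finset (Finset V))
    (hE : ∅ ∉ E) :
    HypThreshold (· ∈ E) ↔ (splitIncidence E).ConnectedDomishold := by
  classical
  constructor
  · rintro ⟨w, t, hw, ht, hiff⟩
    by_cases hne : E.Nonempty
    · by_cases hdeg : ∃ e₀ ∈ E, (∀ v : V, v ∈ e₀) ∧ E = {e₀}
      · -- degenerate case: `E = {e₀}` with `e₀` covering `V`; CDS ↔ nonempty
        obtain ⟨e₀, he₀, hcov, hEeq⟩ := hdeg
        have huniq : ∀ f : {e // e ∈ E}, f = ⟨e₀, he₀⟩ := by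
          intro f
          have h : f.val ∈ ({e₀} : Finset (Finset V)) := by
            rw [← hEeq]; exact f.property
          exact Subtype.ext (Finset.mem_singleton.mp h)
        refine ⟨fun _ => 1, 1, fun _ => zero_le_one, zero_le_one, ?_⟩
        intro S
        rw [si_cds_iff E hE hne S]
        have hsum : ∑ x ∈ S, (1 : ℝ) = (S.card : ℝ) := by simp
        rw [hsum]
        constructor
        · intro h1
          have hS : S.Nonempty := by
            rw [← Finset.card_pos]
            exact_mod_cast lt_of_lt_of_le zero_lt_one h1
          by_cases hA : ∃ v : V, Sum.inl v ∈ S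
          · obtain ⟨v, hv⟩ := hA
            exact Or.inl fun e => ⟨v, (huniq e) ▸ hcov v, hv⟩
          · push_neg at hA
            right
            refine ⟨⟨e₀, he₀⟩, ?_, hcov, huniq⟩
            obtain ⟨x, hx⟩ := hS
            obtain ⟨f, rfl⟩ : ∃ f, x = Sum.inr f := by
              cases x with
              | inl u => exact absurd hx (hA u)
              | inr f => exact ⟨f, rfl⟩
            ext y
            simp only [Finset.mem_singleton]
            constructor
            · intro hy
              cases y with
              | inl u => exact absurd hy (hA u)
              | inr g => rw [huniq g]
            · rintro rfl
              rwa [huniq f] at hx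
        · rintro (hchar | ⟨e, rfl, -, -⟩)
          · obtain ⟨v, -, hv⟩ := hchar ⟨e₀, he₀⟩
            have : 1 ≤ S.card := Finset.one_le_card.mpr ⟨_, hv⟩
            exact_mod_cast this
          · simp
      · -- main case
        set W : ℝ := ∑ v : V, w v with hW
        have htW : t < W := by
          obtain ⟨e₀, he₀⟩ := hne
          by_contra hle
          push_neg at hle
          exact (hiff Finset.univ).mp hle e₀ he₀ (Finset.subset_univ _)
        refine ⟨Sum.elim w (fun _ => 0), W - t, ?_, by linarith, ?_⟩
        · rintro (v | e)
          · exact hw v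
          · exact le_refl 0
        intro S
        rw [si_cds_iff E hE hne S]
        have hsum : ∑ x ∈ S, Sum.elim w (fun _ => (0 : ℝ)) x = ∑ a ∈ S.toLeft, w a := by
          conv_lhs => rw [← Finset.toLeft_disjSum_toRight (u := S)]
          rw [Finset.sum_disjSum]
          simp
        rw [hsum]
        have hadd : ∑ a ∈ S.toLeft, w a + ∑ a ∈ (S.toLeft)ᶜ, w a = W :=
          Finset.sum_add_sum_compl S.toLeft w
        constructor
        · intro hle
          left
          intro e
          have h1 : ∑ v ∈ (S.toLeft)ᶜ, w v ≤ t := by linarith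
          obtain ⟨v, hv, hv2⟩ := Finset.not_subset.mp ((hiff _).mp h1 e.val e.property)
          rw [Finset.mem_compl, not_not] at hv2
          exact ⟨v, hv, Finset.mem_toLeft.mp hv2⟩
        · rintro (hchar | ⟨e, rfl, hcov, huniq⟩)
          · have h1 : ∑ v ∈ (S.toLeft)ᶜ, w v ≤ t := by
              refine (hiff _).mpr ?_
              intro e heE hsub
              obtain ⟨v, hv, hvS⟩ := hchar ⟨e, heE⟩
              have := hsub hv
              rw [Finset.mem_compl] at this
              exact this (Finset.mem_toLeft.mpr hvS)
            linarith
          · exact absurd ⟨e.val, e.property, hcov, by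
              ext f
              simp only [Finset.mem_singleton]
              exact ⟨fun hf => congrArg Subtype.val (huniq ⟨f, hf⟩),
                fun hf => hf ▸ e.property⟩⟩ hdeg
    · -- E is empty
      have hEempty : E = ∅ := Finset.not_nonempty_iff_eq_empty.mp hne
      subst hEempty
      by_cases hV : Nonempty V
      · refine ⟨fun _ => 1, 1, fun _ => zero_le_one, zero_le_one, ?_⟩
        intro S
        have hsum : ∑ x ∈ S, (1 : ℝ) = (S.card : ℝ) := by simp
        rw [hsum]
        constructor
        · intro h1
          have hS : S.Nonempty := by
            rw [← Finset.card_pos]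
            exact_mod_cast lt_of_lt_of_le zero_lt_one h1
          obtain ⟨x, hx⟩ := hS
          obtain ⟨a, rfl⟩ : ∃ a, x = Sum.inl a := by
            cases x with
            | inl a => exact ⟨a, rfl⟩
            | inr f => exact absurd f.property (Finset.notMem_empty _)
          constructor
          · intro y
            cases y with
            | inl v =>
              by_cases hva : v = a
              · exact hva ▸ Or.inl hx
              · exact Or.inr ⟨Sum.inl a, hx, (si_adj_inl_inl ∅).mpr (Ne.symm hva)⟩
            | inr f => exact absurd f.property (Finset.notMem_empty _)
          · intro u hu v hv
            obtain ⟨b, rfl⟩ : ∃ b, u = Sum.inl b := by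
              cases u with
              | inl b => exact ⟨b, rfl⟩
              | inr f => exact absurd f.property (Finset.notMem_empty _)
            obtain ⟨c, rfl⟩ : ∃ c, v = Sum.inl c := by
              cases v with
              | inl c => exact ⟨c, rfl⟩
              | inr f => exact absurd f.property (Finset.notMem_empty _)
            by_cases hbc : b = c
            · subst hbc
              exact ⟨SimpleGraph.Walk.nil, by simpa using hu⟩
            · refine ⟨((si_adj_inl_inl ∅).mpr hbc).toWalk, ?_⟩
              intro x hx'
              simp only [SimpleGraph.Adj.toWalk, SimpleGraph.Walk.support_cons,
                SimpleGraph.Walk.support_nil, List.mem_cons, List.mem_singleton] at hx'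
              rcases hx' with rfl | rfl | h
              · exact hu
              · exact hv
              · exact absurd h List.not_mem_nil
        · rintro ⟨hdom, -⟩
          obtain ⟨v₀⟩ := hV
          have hS : S.Nonempty := by
            rcases hdom (Sum.inl v₀) with h | ⟨x, hxS, -⟩
            · exact ⟨_, h⟩
            · exact ⟨_, hxS⟩
          have : 1 ≤ S.card := Finset.one_le_card.mpr hS
          exact_mod_cast this
      · refine ⟨fun _ => 0, 0, fun _ => le_refl 0, le_refl 0, ?_⟩
        intro S
        refine iff_of_true (by simp) ⟨?_, ?_⟩
        · intro v
          cases v with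
          | inl a => exact absurd ⟨a⟩ hV
          | inr f => exact absurd f.property (Finset.notMem_empty _)
        · intro u hu
          cases u with
          | inl a => exact absurd ⟨a⟩ hV
          | inr f => exact absurd f.property (Finset.notMem_empty _)
  · rintro ⟨w', t', hw', ht', hiff⟩
    by_cases hne : E.Nonempty
    · set W : ℝ := ∑ v : V, w' (Sum.inl v) with hWdef
      have hcds_univ : (splitIncidence E).IsCDSet (Finset.univ.image Sum.inl) := by
        rw [si_cds_iff E hE hne]
        left
        intro e
        obtain ⟨v, hv⟩ := Finset.nonempty_of_ne_empty (fun h => hE (h ▸ e.property))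
        exact ⟨v, hv, Finset.mem_image_of_mem _ (Finset.mem_univ v)⟩
      have hWt : t' ≤ W := by
        have := (hiff _).mpr hcds_univ
        rwa [Finset.sum_image (fun a _ b _ h => Sum.inl.inj h)] at this
      refine ⟨fun v => w' (Sum.inl v), W - t', fun v => hw' _, by linarith, ?_⟩
      intro X
      have himg : ∑ x ∈ (Xᶜ).image Sum.inl, w' x = ∑ v ∈ Xᶜ, w' (Sum.inl v) :=
        Finset.sum_image (fun a _ b _ h => Sum.inl.inj h)
      have hadd : ∑ v ∈ X, w' (Sum.inl v) + ∑ v ∈ Xᶜ, w' (Sum.inl v) = W :=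
        Finset.sum_add_sum_compl X _
      have hcds := hiff ((Xᶜ).image Sum.inl)
      rw [si_cds_iff E hE hne] at hcds
      constructor
      · intro hle e heE hsub
        have h1 : t' ≤ ∑ x ∈ (Xᶜ).image Sum.inl, w' x := by
          rw [himg]; linarith
        rcases hcds.mp h1 with hchar | ⟨f, hfeq, -, -⟩
        · obtain ⟨v, hv, hvS⟩ := hchar ⟨e, heE⟩
          obtain ⟨a, ha, haeq⟩ := Finset.mem_image.mp hvS
          obtain rfl : a = v := Sum.inl.inj haeq
          exact (Finset.mem_compl.mp ha) (hsub hv)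
        · have : Sum.inr f ∈ (Xᶜ).image Sum.inl := hfeq ▸ Finset.mem_singleton_self _
          obtain ⟨a, -, ha⟩ := Finset.mem_image.mp this
          cases ha
      · intro hX
        have h1 : t' ≤ ∑ x ∈ (Xᶜ).image Sum.inl, w' x := by
          refine hcds.mpr (Or.inl ?_)
          intro e
          obtain ⟨v, hv, hvX⟩ := Finset.not_subset.mp (hX e.val e.property)
          exact ⟨v, hv, Finset.mem_image_of_mem _ (Finset.mem_compl.mpr hvX)⟩
        rw [himg] at h1
        linarith
    · refine ⟨fun _ => 0, 0, fun _ => le_refl 0, le_refl 0, ?_⟩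
      intro X
      refine iff_of_true (by simp) ?_
      intro e he
      exact absurd ⟨e, he⟩ hne
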